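/- Let X be a normed space over 𝕜, Z ⊆ X a closed subspace, i : Z → X the inclusion and q : X → X/Z the quotient map. Then the second dual map q** : X** → (X/Z)** is surjective, its kernel equals the range of i** : Z** → X**, and the induced map from the quotient Banach space X** / range(i**) to (X/Z)** is an isometric isomorphism; that is, (X/Z)** ≅ X**/Z** isometrically (identifying Z** with the range of the closed monomorphism i**). -/

import Mathlib

open NormedSpace

/-- The dual map `f ↦ f*`, where `f*(g) = g ∘ f`. -/
noncomputable def dualMapCLM {𝕜 : Type*} [RCLike 𝕜] {X Y : Type*} [SeminormedAddCommGroup X]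
    [NormedSpace 𝕜 X] [SeminormedAddCommGroup Y] [NormedSpace 𝕜 Y] (f : X →L[𝕜] Y) :
    StrongDual 𝕜 Y →L[𝕜] StrongDual 𝕜 X :=
  (ContinuousLinearMap.compL 𝕜 X Y 𝕜).flip f

/-- The quotient map `q : X → X/Z` as a continuous linear map. -/
noncomputable def mkQCLM {𝕜 : Type*} [RCLike 𝕜] {X : Type*} [NormedAddCommGroup X]
    [NormedSpace 𝕜 X] (Z : Submodule 𝕜 X) : X →L[𝕜] X ⧸ Z :=
  Z.mkQ.mkContinuous 1 (fun x => by simpa using Submodule.Quotient.norm_mk_le Z x)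

section Aux
variable {𝕜 : Type*} [RCLike 𝕜]

lemma aux_real {a b C : ℝ} (hC : 0 ≤ C) (h : ∀ ε > 0, ∃ t, a ≤ C * t ∧ t < b + ε) :
    a ≤ C * b := by
  refine le_of_forall_pos_le_add fun ε hε => ?_
  rcases lt_or_eq_of_le hC with hCpos | hC0
  · obtain ⟨t, h1, h2⟩ := h (ε / C) (div_pos hε hCpos)
    have : C * t ≤ C * (b + ε / C) := by nlinarith
    calc a ≤ C * t := h1
      _ ≤ C * (b + ε / C) := this
      _ = C * b + ε := by field_simp
  · obtain ⟨t, h1, h2⟩ := h 1 one_pos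
    nlinarith

/-- bound on a linear map out of a quotient from a bound on representatives -/
lemma aux_quot_bound {E G : Type*} [NormedAddCommGroup E] [NormedSpace 𝕜 E]
    [SeminormedAddCommGroup G] [NormedSpace 𝕜 G] (K : Submodule 𝕜 E) (g : (E ⧸ K) →ₗ[𝕜] G) {C : ℝ}
    (hC0 : 0 ≤ C) (hC : ∀ x : E, ‖g (Submodule.Quotient.mk x)‖ ≤ C * ‖x‖)
    (y : E ⧸ K) : ‖g y‖ ≤ C * ‖y‖ := by
  refine le_of_forall_pos_le_add fun ε hε => ?_
  rcases lt_or_eq_of_le hC0 with hCpos | hC0'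
  · obtain ⟨m, hm, hm'⟩ := Submodule.Quotient.norm_mk_lt y (div_pos hε hCpos)
    calc ‖g y‖ = ‖g (Submodule.Quotient.mk m)‖ := by rw [hm]
      _ ≤ C * ‖m‖ := hC m
      _ ≤ C * (‖y‖ + ε / C) := by nlinarith
      _ = C * ‖y‖ + ε := by field_simp
  · obtain ⟨m, hm, hm'⟩ := Submodule.Quotient.norm_mk_lt y one_pos
    have := hC m
    rw [hm] at this
    nlinarith [norm_nonneg y]

variable {X : Type*} [NormedAddCommGroup X] [NormedSpace 𝕜 X] (Z : Submodule 𝕜 X)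

lemma norm_mkQCLM_le : ‖mkQCLM (𝕜 := 𝕜) Z‖ ≤ 1 :=
  Z.mkQ.mkContinuous_norm_le zero_le_one _

lemma norm_dualMapCLM_le {Y W : Type*} [SeminormedAddCommGroup Y] [NormedSpace 𝕜 Y]
    [SeminormedAddCommGroup W] [NormedSpace 𝕜 W] (f : Y →L[𝕜] W) :
    ‖dualMapCLM f‖ ≤ ‖f‖ :=
  ContinuousLinearMap.opNorm_le_bound _ (norm_nonneg f) fun g => by
    calc ‖g.comp f‖ ≤ ‖g‖ * ‖f‖ := ContinuousLinearMap.opNorm_comp_le _ _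
      _ = ‖f‖ * ‖g‖ := mul_comm _ _

lemma key1 (g : StrongDual 𝕜 (X ⧸ Z)) : ‖dualMapCLM (mkQCLM Z) g‖ = ‖g‖ := by
  refine le_antisymm ?_ ?_
  · calc ‖g.comp (mkQCLM Z)‖ ≤ ‖g‖ * ‖mkQCLM (𝕜 := 𝕜) Z‖ := ContinuousLinearMap.opNorm_comp_le _ _
      _ ≤ ‖g‖ * 1 := by nlinarith [norm_mkQCLM_le (𝕜 := 𝕜) Z, norm_nonneg g]
      _ = ‖g‖ := mul_one _
  · refine ContinuousLinearMap.opNorm_le_bound _ (norm_nonneg _) fun y =>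
      aux_quot_bound Z (g : (X ⧸ Z) →ₗ[𝕜] 𝕜) (norm_nonneg _) (fun x => ?_) y
    exact (dualMapCLM (mkQCLM Z) g).le_opNorm x

lemma key2 (f : StrongDual 𝕜 X) (hf : ∀ z ∈ Z, f z = 0) :
    ∃ g : StrongDual 𝕜 (X ⧸ Z), dualMapCLM (mkQCLM Z) g = f := by
  have hker : Z ≤ LinearMap.ker (f : X →ₗ[𝕜] 𝕜) := fun z hz => hf z hz
  let g₀ := Z.liftQ (f : X →ₗ[𝕜] 𝕜) hker
  have hb : ∀ y, ‖g₀ y‖ ≤ ‖f‖ * ‖y‖ :=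
    aux_quot_bound Z g₀ (norm_nonneg f) fun x => f.le_opNorm x
  refine ⟨g₀.mkContinuous ‖f‖ hb, ?_⟩
  ext x
  rfl

end Aux

section Aux2
variable {𝕜 : Type*} [RCLike 𝕜] {X : Type*} [NormedAddCommGroup X] [NormedSpace 𝕜 X]
  (Z : Submodule 𝕜 X)

set_option maxHeartbeats 1000000 in
lemma key_surj (Ψ : StrongDual 𝕜 (StrongDual 𝕜 (X ⧸ Z))) :
    ∃ Φ : StrongDual 𝕜 (StrongDual 𝕜 X),
      dualMapCLM (dualMapCLM (mkQCLM Z)) Φ = Ψ ∧ ‖Φ‖ ≤ ‖Ψ‖ := by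
  let L : StrongDual 𝕜 (X ⧸ Z) →L[𝕜] StrongDual 𝕜 X := dualMapCLM (mkQCLM Z)
  have hLinj : Function.Injective L := fun a b hab => by
    ext y
    obtain ⟨x, rfl⟩ := Submodule.Quotient.mk_surjective Z y
    exact DFunLike.congr_fun hab x
  let eqv := LinearEquiv.ofInjective (L : StrongDual 𝕜 (X ⧸ Z) →ₗ[𝕜] StrongDual 𝕜 X) hLinj
  have hcoe : ∀ g, ((eqv g : LinearMap.range (L : StrongDual 𝕜 (X ⧸ Z) →ₗ[𝕜] StrongDual 𝕜 X)) : StrongDual 𝕜 X)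
      = L g := fun g => rfl
  let f₀lin : (LinearMap.range (L : StrongDual 𝕜 (X ⧸ Z) →ₗ[𝕜] StrongDual 𝕜 X)) →ₗ[𝕜] 𝕜 :=
    Ψ.toLinearMap ∘ₗ (eqv.symm : _ →ₗ[𝕜] StrongDual 𝕜 (X ⧸ Z))
  have bound : ∀ v, ‖f₀lin v‖ ≤ ‖Ψ‖ * ‖v‖ := by
    intro v
    obtain ⟨g, rfl⟩ := eqv.surjective v
    have h1 : f₀lin (eqv g) = Ψ g := by
      simp only [f₀lin, LinearMap.coe_comp, Function.comp_apply, LinearEquiv.coe_coe,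
        LinearEquiv.symm_apply_apply]
      rfl
    have h2 : ‖(eqv g : StrongDual 𝕜 X)‖ = ‖g‖ := by rw [hcoe g]; exact key1 Z g
    rw [h1]
    calc ‖Ψ g‖ ≤ ‖Ψ‖ * ‖g‖ := Ψ.le_opNorm g
      _ = ‖Ψ‖ * ‖(eqv g : StrongDual 𝕜 X)‖ := by rw [h2]
  let f₀ := LinearMap.mkContinuous (E := ↥(LinearMap.range (L : StrongDual 𝕜 (X ⧸ Z) →ₗ[𝕜] StrongDual 𝕜 X))) (F := 𝕜) (σ := RingHom.id 𝕜) f₀lin ‖Ψ‖ bound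
  obtain ⟨Φ, hΦ, hnorm⟩ :=
    exists_extension_norm_eq (LinearMap.range (L : StrongDual 𝕜 (X ⧸ Z) →ₗ[𝕜] StrongDual 𝕜 X)) f₀
  refine ⟨Φ, ?_, ?_⟩
  · ext g
    have hmem : L g ∈ LinearMap.range (L : StrongDual 𝕜 (X ⧸ Z) →ₗ[𝕜] StrongDual 𝕜 X) :=
      LinearMap.mem_range_self _ g
    have h1 : Φ (L g) = f₀ ⟨L g, hmem⟩ := hΦ ⟨L g, hmem⟩
    have h3 : (⟨L g, hmem⟩ : LinearMap.range (L : StrongDual 𝕜 (X ⧸ Z) →ₗ[𝕜] StrongDual 𝕜 X)) = eqv g :=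
      Subtype.ext rfl
    have h4 : f₀ (eqv g) = Ψ g := by
      show f₀lin (eqv g) = Ψ g
      simp only [f₀lin, LinearMap.coe_comp, Function.comp_apply, LinearEquiv.coe_coe,
        LinearEquiv.symm_apply_apply]
      rfl
    calc (dualMapCLM (dualMapCLM (mkQCLM Z)) Φ) g = Φ (L g) := rfl
      _ = f₀ ⟨L g, hmem⟩ := h1
      _ = f₀ (eqv g) := by rw [h3]
      _ = Ψ g := h4
  · rw [hnorm]
    exact LinearMap.mkContinuous_norm_le (E := ↥(LinearMap.range (L : StrongDual 𝕜 (X ⧸ Z) →ₗ[𝕜] StrongDual 𝕜 X))) (F := 𝕜) (σ₁₂ := RingHom.id 𝕜) f₀lin (norm_nonneg Ψ) bound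

/-- lifting a functional through a surjective map of Banach spaces -/
lemma aux_lift {E F : Type*} [NormedAddCommGroup E] [NormedSpace 𝕜 E] [CompleteSpace E]
    [NormedAddCommGroup F] [NormedSpace 𝕜 F] [CompleteSpace F]
    (h : E →L[𝕜] F) (hsurj : Function.Surjective h) (Φ : E →L[𝕜] 𝕜)
    (hΦ : ∀ x, h x = 0 → Φ x = 0) : ∃ ξ : F →L[𝕜] 𝕜, ξ.comp h = Φ := by
  set K : Submodule 𝕜 E := LinearMap.ker (h : E →ₗ[𝕜] F) with hK
  haveI : IsClosed (K : Set E) := ContinuousLinearMap.isClosed_ker h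
  have hle : K ≤ LinearMap.ker (h : E →ₗ[𝕜] F) := le_refl _
  let hbar₀ : (E ⧸ K) →ₗ[𝕜] F := K.liftQ (h : E →ₗ[𝕜] F) hle
  have hbarb : ∀ y, ‖hbar₀ y‖ ≤ ‖h‖ * ‖y‖ :=
    aux_quot_bound K hbar₀ (norm_nonneg h) fun x => h.le_opNorm x
  let hbar : (E ⧸ K) →L[𝕜] F := hbar₀.mkContinuous ‖h‖ hbarb
  have hΦle : K ≤ LinearMap.ker (Φ : E →ₗ[𝕜] 𝕜) := fun x hx => hΦ x hx
  let Φbar₀ : (E ⧸ K) →ₗ[𝕜] 𝕜 := K.liftQ (Φ : E →ₗ[𝕜] 𝕜) hΦle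
  have Φbarb : ∀ y, ‖Φbar₀ y‖ ≤ ‖Φ‖ * ‖y‖ :=
    aux_quot_bound K Φbar₀ (norm_nonneg Φ) fun x => Φ.le_opNorm x
  let Φbar : (E ⧸ K) →L[𝕜] 𝕜 := Φbar₀.mkContinuous ‖Φ‖ Φbarb
  have hinj : LinearMap.ker (hbar : (E ⧸ K) →ₗ[𝕜] F) = ⊥ := by
    rw [LinearMap.ker_eq_bot']
    intro y hy
    obtain ⟨x, rfl⟩ := Submodule.Quotient.mk_surjective K y
    have : h x = 0 := hy
    rwa [Submodule.Quotient.mk_eq_zero]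
  have hsurj' : LinearMap.range (hbar : (E ⧸ K) →ₗ[𝕜] F) = ⊤ := by
    rw [LinearMap.range_eq_top]
    intro z
    obtain ⟨x, hx⟩ := hsurj z
    exact ⟨Submodule.Quotient.mk x, hx⟩
  let eqv := ContinuousLinearEquiv.ofBijective hbar hinj hsurj'
  refine ⟨Φbar.comp (eqv.symm : F →L[𝕜] E ⧸ K), ?_⟩
  ext x
  have : eqv.symm (h x) = Submodule.Quotient.mk x := by
    apply eqv.injective
    simp only [ContinuousLinearEquiv.apply_symm_apply]
    rfl
  show Φbar ((eqv.symm : F →L[𝕜] E ⧸ K) (h x)) = Φ x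
  have h2 : ((eqv.symm : F →L[𝕜] E ⧸ K) (h x)) = Submodule.Quotient.mk x := this
  rw [h2]
  rfl

end Aux2

section Aux3
variable {𝕜 : Type*} [RCLike 𝕜] {X : Type*} [NormedAddCommGroup X] [NormedSpace 𝕜 X]
  (Z : Submodule 𝕜 X)

lemma key_ker : LinearMap.ker ((dualMapCLM (dualMapCLM (mkQCLM Z)) : StrongDual 𝕜 (StrongDual 𝕜 X) →ₗ[𝕜] StrongDual 𝕜 (StrongDual 𝕜 (X ⧸ Z)))) =
    LinearMap.range ((dualMapCLM (dualMapCLM Z.subtypeL) : StrongDual 𝕜 (StrongDual 𝕜 Z) →ₗ[𝕜] StrongDual 𝕜 (StrongDual 𝕜 X))) := by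
  ext Φ
  simp only [LinearMap.mem_ker, LinearMap.mem_range]
  constructor
  · intro hΦ
    have hsurj : Function.Surjective (dualMapCLM (Z.subtypeL) : StrongDual 𝕜 X →L[𝕜] StrongDual 𝕜 Z) := by
      intro h
      obtain ⟨g, hg, -⟩ := exists_extension_norm_eq Z h
      refine ⟨g, ?_⟩
      ext z
      exact hg z
    have hvanish : ∀ x : StrongDual 𝕜 X, dualMapCLM Z.subtypeL x = 0 → Φ x = 0 := by
      intro x hx
      have hxz : ∀ z ∈ Z, x z = 0 := fun z hz => DFunLike.congr_fun hx (⟨z, hz⟩ : Z)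
      obtain ⟨g, hg⟩ := key2 Z x hxz
      rw [← hg]
      exact DFunLike.congr_fun hΦ g
    obtain ⟨ξ, hξ⟩ := aux_lift (dualMapCLM Z.subtypeL) hsurj Φ hvanish
    exact ⟨ξ, hξ⟩
  · rintro ⟨ξ, rfl⟩
    ext g
    show ξ ((dualMapCLM Z.subtypeL) ((dualMapCLM (mkQCLM Z)) g)) = 0
    have h0 : (dualMapCLM Z.subtypeL) ((dualMapCLM (mkQCLM Z)) g) = 0 := by
      ext z
      show g (Submodule.Quotient.mk (z : X)) = 0
      rw [show (Submodule.Quotient.mk (z : X) : X ⧸ Z) = 0 from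
        (Submodule.Quotient.mk_eq_zero Z).mpr z.2, map_zero]
    rw [h0, map_zero]

lemma norm_qdd_le : ‖dualMapCLM (dualMapCLM (mkQCLM (𝕜 := 𝕜) Z))‖ ≤ 1 :=
  (norm_dualMapCLM_le _).trans ((norm_dualMapCLM_le _).trans (norm_mkQCLM_le Z))

end Aux3


set_option maxHeartbeats 2000000 in
/-- Let `Z` be a closed subspace of a normed space `X` over `𝕜 ∈ {ℝ, ℂ}`,
`i : Z → X` the inclusion and `q : X → X/Z` the quotient map. Then `q** : X** → (X/Z)**`
is surjective, its kernel is the range of `i** : Z** → X**`, and the induced map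
`X** / range(i**) → (X/Z)**` is an isometric isomorphism; that is,
`(X/Z)** ≅ X**/Z**` isometrically (identifying `Z**` with the range of `i**`). -/
theorem bidual_quotient_iso {𝕜 : Type*} [RCLike 𝕜]
    {X : Type*} [NormedAddCommGroup X] [NormedSpace 𝕜 X]
    (Z : Submodule 𝕜 X) (hZ : IsClosed (Z : Set X)) :
    Function.Surjective ⇑(dualMapCLM (dualMapCLM (mkQCLM Z))) ∧
    LinearMap.ker ((dualMapCLM (dualMapCLM (mkQCLM Z)) : StrongDual 𝕜 (StrongDual 𝕜 X) →ₗ[𝕜] StrongDual 𝕜 (StrongDual 𝕜 (X ⧸ Z)))) =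
      LinearMap.range ((dualMapCLM (dualMapCLM Z.subtypeL) : StrongDual 𝕜 (StrongDual 𝕜 Z) →ₗ[𝕜] StrongDual 𝕜 (StrongDual 𝕜 X))) ∧
    ∃ e : (StrongDual 𝕜 (StrongDual 𝕜 X) ⧸ LinearMap.range ((dualMapCLM (dualMapCLM Z.subtypeL) : StrongDual 𝕜 (StrongDual 𝕜 Z) →ₗ[𝕜] StrongDual 𝕜 (StrongDual 𝕜 X))))
        ≃ₗᵢ[𝕜] StrongDual 𝕜 (StrongDual 𝕜 (X ⧸ Z)),
      ∀ ξ : StrongDual 𝕜 (StrongDual 𝕜 X),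
        e (Submodule.Quotient.mk ξ) = dualMapCLM (dualMapCLM (mkQCLM Z)) ξ := by
  have hker := key_ker Z
  refine ⟨fun Ψ => (key_surj Z Ψ).imp fun Φ h => h.1, hker, ?_⟩
  set R := LinearMap.range ((dualMapCLM (dualMapCLM Z.subtypeL) : StrongDual 𝕜 (StrongDual 𝕜 Z) →ₗ[𝕜] StrongDual 𝕜 (StrongDual 𝕜 X))) with hR
  have hle : R ≤ LinearMap.ker
      ((dualMapCLM (dualMapCLM (mkQCLM Z))) : StrongDual 𝕜 (StrongDual 𝕜 X) →ₗ[𝕜] StrongDual 𝕜 (StrongDual 𝕜 (X ⧸ Z))) := by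
    intro x hx
    have : x ∈ LinearMap.ker ((dualMapCLM (dualMapCLM (mkQCLM Z))) : StrongDual 𝕜 (StrongDual 𝕜 X) →ₗ[𝕜] StrongDual 𝕜 (StrongDual 𝕜 (X ⧸ Z))) := hker ▸ hx
    exact this
  let l : (StrongDual 𝕜 (StrongDual 𝕜 X) ⧸ R) →ₗ[𝕜] StrongDual 𝕜 (StrongDual 𝕜 (X ⧸ Z)) :=
    R.liftQ ((dualMapCLM (dualMapCLM (mkQCLM Z))) :
      StrongDual 𝕜 (StrongDual 𝕜 X) →ₗ[𝕜] StrongDual 𝕜 (StrongDual 𝕜 (X ⧸ Z))) hle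
  have hl : ∀ Φ : StrongDual 𝕜 (StrongDual 𝕜 X),
      l (Submodule.Quotient.mk Φ) = dualMapCLM (dualMapCLM (mkQCLM Z)) Φ := fun Φ => rfl
  have hinj : Function.Injective l := by
    intro a b hab
    obtain ⟨Φa, rfl⟩ := Submodule.Quotient.mk_surjective R a
    obtain ⟨Φb, rfl⟩ := Submodule.Quotient.mk_surjective R b
    rw [Submodule.Quotient.eq]
    rw [hl, hl] at hab
    have : Φa - Φb ∈ LinearMap.ker ((dualMapCLM (dualMapCLM (mkQCLM Z))) : StrongDual 𝕜 (StrongDual 𝕜 X) →ₗ[𝕜] StrongDual 𝕜 (StrongDual 𝕜 (X ⧸ Z))) := by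
      rw [LinearMap.mem_ker]; exact (LinearMap.map_sub _ _ _).trans (sub_eq_zero.mpr hab)
    exact hker ▸ this
  have hsurj : Function.Surjective l := by
    intro Ψ
    obtain ⟨Φ, hΦ, -⟩ := key_surj Z Ψ
    exact ⟨Submodule.Quotient.mk Φ, (hl Φ).trans hΦ⟩
  have hnormle : ∀ y : StrongDual 𝕜 (StrongDual 𝕜 X) ⧸ R, ‖l y‖ ≤ 1 * ‖y‖ := by
    intro y
    refine aux_real zero_le_one fun ε hε => ?_
    obtain ⟨m, hm, hm'⟩ := Submodule.Quotient.norm_mk_lt y hε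
    refine ⟨‖m‖, ?_, hm'⟩
    rw [← hm, hl]
    calc ‖dualMapCLM (dualMapCLM (mkQCLM Z)) m‖
        ≤ ‖dualMapCLM (dualMapCLM (mkQCLM (𝕜 := 𝕜) Z))‖ * ‖m‖ :=
          (dualMapCLM (dualMapCLM (mkQCLM Z))).le_opNorm m
      _ ≤ 1 * ‖m‖ := by nlinarith [norm_qdd_le (𝕜 := 𝕜) Z, norm_nonneg m]
  have hnorm : ∀ y : StrongDual 𝕜 (StrongDual 𝕜 X) ⧸ R, ‖l y‖ = ‖y‖ := by
    intro y
    obtain ⟨Φ, rfl⟩ := Submodule.Quotient.mk_surjective R y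
    refine le_antisymm (by simpa using hnormle (Submodule.Quotient.mk Φ)) ?_
    obtain ⟨Φ', hΦ', hΦ'n⟩ := key_surj Z (dualMapCLM (dualMapCLM (mkQCLM Z)) Φ)
    have hmk : (Submodule.Quotient.mk Φ' : StrongDual 𝕜 (StrongDual 𝕜 X) ⧸ R) = Submodule.Quotient.mk Φ := by
      rw [Submodule.Quotient.eq]
      have : Φ' - Φ ∈ LinearMap.ker ((dualMapCLM (dualMapCLM (mkQCLM Z))) : StrongDual 𝕜 (StrongDual 𝕜 X) →ₗ[𝕜] StrongDual 𝕜 (StrongDual 𝕜 (X ⧸ Z))) := by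
        rw [LinearMap.mem_ker]; exact (LinearMap.map_sub _ _ _).trans (sub_eq_zero.mpr hΦ')
      exact hker ▸ this
    calc ‖(Submodule.Quotient.mk Φ : StrongDual 𝕜 (StrongDual 𝕜 X) ⧸ R)‖
        = ‖(Submodule.Quotient.mk Φ' : StrongDual 𝕜 (StrongDual 𝕜 X) ⧸ R)‖ := by rw [hmk]
      _ ≤ ‖Φ'‖ := Submodule.Quotient.norm_mk_le _ _
      _ ≤ ‖dualMapCLM (dualMapCLM (mkQCLM Z)) Φ‖ := hΦ'n
      _ = ‖l (Submodule.Quotient.mk Φ)‖ := by rw [hl]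
  exact ⟨⟨LinearEquiv.ofBijective l ⟨hinj, hsurj⟩, hnorm⟩, fun ξ => hl ξ⟩
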